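/- Let H_n denote the n-th physicists' Hermite polynomial, defined by H_n(x) = (−1)^n e^{x²} (d/dx)^n e^{−x²}. Then for every nonnegative integer m, ∫_ℝ H_{2m}(x) · e^{−x²/2} dx = √(2π) · (2m)! / m!. -/

import Mathlib

open MeasureTheory

/-- The `n`-th physicists' Hermite polynomial, via the Rodrigues formula
`H_n(x) = (−1)^n e^{x²} (d/dx)^n e^{−x²}`. -/
noncomputable def physHermite (n : ℕ) (x : ℝ) : ℝ :=
  (-1) ^ n * Real.exp (x ^ 2) * iteratedDeriv n (fun y : ℝ => Real.exp (-y ^ 2)) x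

namespace PhysHermiteAux

open Polynomial Real Filter

/-- Polynomial version of the physicists' Hermite polynomials. -/
noncomputable def P : ℕ → Polynomial ℝ
  | 0 => 1
  | n + 1 => C 2 * X * P n - derivative (P n)

lemma hasDerivAt_gauss (x : ℝ) :
    HasDerivAt (fun y : ℝ => Real.exp (-y ^ 2)) (Real.exp (-x ^ 2) * (-(2 * x))) x := by
  have h : HasDerivAt (fun y : ℝ => -y ^ 2) (-(2 * x)) x := by
    simpa using (hasDerivAt_pow 2 x).fun_neg
  exact h.exp

lemma iteratedDeriv_gauss (n : ℕ) (x : ℝ) :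
    iteratedDeriv n (fun y : ℝ => Real.exp (-y ^ 2)) x
      = (-1) ^ n * (P n).eval x * Real.exp (-x ^ 2) := by
  induction n generalizing x with
  | zero => simp [P]
  | succ n ih =>
    rw [iteratedDeriv_succ]
    have hfun : iteratedDeriv n (fun y : ℝ => Real.exp (-y ^ 2))
        = fun x : ℝ => (-1) ^ n * (P n).eval x * Real.exp (-x ^ 2) := funext fun x => ih x
    rw [hfun]
    have hd : HasDerivAt (fun x : ℝ => (-1 : ℝ) ^ n * (P n).eval x * Real.exp (-x ^ 2))
        ((-1) ^ (n + 1) * (P (n + 1)).eval x * Real.exp (-x ^ 2)) x := by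
      have h1 : HasDerivAt (fun x : ℝ => (-1 : ℝ) ^ n * (P n).eval x)
          ((-1) ^ n * (derivative (P n)).eval x) x := ((P n).hasDerivAt x).const_mul _
      have := h1.fun_mul (hasDerivAt_gauss x)
      refine HasDerivAt.congr_deriv this (Eq.symm ?_)
      show ((-1 : ℝ) ^ (n + 1) * (P (n + 1)).eval x * Real.exp (-x ^ 2)) = _
      rw [show P (n + 1) = C 2 * X * P n - derivative (P n) from rfl]
      simp only [eval_sub, eval_mul, eval_C, eval_X]
      ring
    rw [hd.deriv]

lemma physHermite_eq (n : ℕ) (x : ℝ) : physHermite n x = (P n).eval x := by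
  rw [physHermite, iteratedDeriv_gauss]
  rw [show ((-1 : ℝ) ^ n * Real.exp (x ^ 2) * ((-1) ^ n * (P n).eval x * Real.exp (-x ^ 2)))
      = ((-1) ^ n * (-1) ^ n) * (Real.exp (x ^ 2) * Real.exp (-x ^ 2)) * (P n).eval x by ring]
  rw [← Real.exp_add, ← pow_add]
  simp [pow_mul, neg_neg]

lemma derivative_P (n : ℕ) :
    derivative (P (n + 1)) = C (2 * (n + 1) : ℝ) * P n := by
  induction n with
  | zero =>
    show derivative (C 2 * X * P 0 - derivative (P 0)) = _
    simp [P]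
  | succ n ih =>
    rw [show P (n + 1 + 1) = C 2 * X * P (n + 1) - derivative (P (n + 1)) from rfl]
    rw [derivative_sub, derivative_mul, derivative_mul, derivative_C, derivative_X, ih,
      derivative_mul, derivative_C,
      show P (n + 1) = C 2 * X * P n - derivative (P n) from rfl]
    push_cast
    simp only [map_add, map_mul, map_one, map_ofNat, zero_mul, zero_add, one_mul]
    ring

lemma integrable_pow_gauss (k : ℕ) :
    Integrable (fun x : ℝ => x ^ k * Real.exp (-x ^ 2 / 2)) := by
  have h := integrable_rpow_mul_exp_neg_mul_sq (b := 1 / 2) (by norm_num) (s := k)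
    (lt_of_lt_of_le neg_one_lt_zero (Nat.cast_nonneg k))
  refine h.congr (Filter.Eventually.of_forall fun x => ?_)
  simp only [Real.rpow_natCast]
  ring_nf

lemma integrable_poly_gauss (Q : Polynomial ℝ) :
    Integrable (fun x : ℝ => Q.eval x * Real.exp (-x ^ 2 / 2)) := by
  induction Q using Polynomial.induction_on' with
  | monomial k c =>
    simpa [eval_monomial, mul_assoc] using (integrable_pow_gauss k).const_mul c
  | add p q hp hq =>
    simpa [add_mul, Pi.add_def] using hp.add hq

lemma tendsto_pow_gauss_atTop (k : ℕ) :
    Tendsto (fun x : ℝ => x ^ k * Real.exp (-x ^ 2 / 2)) atTop (nhds 0) := by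
  have hexp : Tendsto (fun x : ℝ => Real.exp (-(1 / 2) * x)) atTop (nhds 0) := by
    have h2 : Tendsto (fun x : ℝ => -(1 / 2) * x) atTop atBot :=
      tendsto_id.const_mul_atTop_of_neg (by norm_num)
    exact Real.tendsto_exp_atBot.comp h2
  have h := (rpow_mul_exp_neg_mul_sq_isLittleO_exp_neg (b := 1 / 2) (by norm_num)
    (k : ℝ)).tendsto_zero_of_tendsto hexp
  refine h.congr fun x => ?_
  simp only [Real.rpow_natCast]
  ring_nf

lemma tendsto_poly_gauss_atTop (Q : Polynomial ℝ) :
    Tendsto (fun x : ℝ => Q.eval x * Real.exp (-x ^ 2 / 2)) atTop (nhds 0) := by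
  induction Q using Polynomial.induction_on' with
  | monomial k c =>
    simpa [eval_monomial, mul_assoc] using (tendsto_pow_gauss_atTop k).const_mul c
  | add p q hp hq =>
    simpa [add_mul] using hp.add hq

lemma tendsto_poly_gauss_atBot (Q : Polynomial ℝ) :
    Tendsto (fun x : ℝ => Q.eval x * Real.exp (-x ^ 2 / 2)) atBot (nhds 0) := by
  have h := (tendsto_poly_gauss_atTop (Q.comp (-X))).comp tendsto_neg_atBot_atTop
  refine h.congr fun x => ?_
  simp [Function.comp, eval_comp]

lemma integral_deriv_poly_gauss (Q : Polynomial ℝ) :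
    ∫ x : ℝ, (derivative Q).eval x * Real.exp (-x ^ 2 / 2)
      = ∫ x : ℝ, x * Q.eval x * Real.exp (-x ^ 2 / 2) := by
  set R : Polynomial ℝ := derivative Q - X * Q with hR
  have hderiv : ∀ x : ℝ, HasDerivAt (fun x : ℝ => Q.eval x * Real.exp (-x ^ 2 / 2))
      (R.eval x * Real.exp (-x ^ 2 / 2)) x := by
    intro x
    have hg : HasDerivAt (fun y : ℝ => Real.exp (-y ^ 2 / 2)) (Real.exp (-x ^ 2 / 2) * (-x)) x := by
      have h1 : HasDerivAt (fun y : ℝ => -y ^ 2 / 2) (-x) x := by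
        have := ((hasDerivAt_pow 2 x).neg).div_const 2
        simpa using this.congr_deriv (by push_cast; ring)
      exact h1.exp
    have := (Q.hasDerivAt x).mul hg
    refine this.congr_deriv ?_
    simp only [hR, eval_sub, eval_mul, eval_X]
    ring
  have hzero : ∫ x : ℝ, R.eval x * Real.exp (-x ^ 2 / 2) = 0 := by
    have := integral_of_hasDerivAt_of_tendsto hderiv (integrable_poly_gauss R)
      (tendsto_poly_gauss_atBot Q) (tendsto_poly_gauss_atTop Q)
    simpa using this
  have hsub : ∫ x : ℝ, R.eval x * Real.exp (-x ^ 2 / 2)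
      = (∫ x : ℝ, (derivative Q).eval x * Real.exp (-x ^ 2 / 2))
        - ∫ x : ℝ, (X * Q : Polynomial ℝ).eval x * Real.exp (-x ^ 2 / 2) := by
    rw [← integral_sub (integrable_poly_gauss _) (integrable_poly_gauss _)]
    refine integral_congr_ae (Filter.Eventually.of_forall fun x => ?_)
    simp only [hR, eval_sub]
    ring
  rw [hsub] at hzero
  have := sub_eq_zero.mp hzero
  rw [this]
  refine integral_congr_ae (Filter.Eventually.of_forall fun x => ?_)
  simp [eval_mul]

lemma integral_P_succ (n : ℕ) :
    ∫ x : ℝ, (P (n + 1)).eval x * Real.exp (-x ^ 2 / 2)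
      = ∫ x : ℝ, (derivative (P n)).eval x * Real.exp (-x ^ 2 / 2) := by
  have key := integral_deriv_poly_gauss (P n)
  have hA : Integrable (fun x : ℝ => 2 * (x * (P n).eval x * Real.exp (-x ^ 2 / 2))) := by
    have h := (integrable_poly_gauss (X * P n)).const_mul 2
    refine h.congr (Filter.Eventually.of_forall fun x => ?_)
    simp only [eval_mul, eval_X]
    try ring
  have hfun : (fun x : ℝ => (P (n + 1)).eval x * Real.exp (-x ^ 2 / 2))
      = fun x : ℝ => 2 * (x * (P n).eval x * Real.exp (-x ^ 2 / 2))
        - (derivative (P n)).eval x * Real.exp (-x ^ 2 / 2) := by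
    funext x
    rw [show P (n + 1) = C 2 * X * P n - derivative (P n) from rfl]
    simp only [eval_sub, eval_mul, eval_C, eval_X]
    ring
  rw [hfun, integral_sub hA (integrable_poly_gauss _), integral_const_mul, ← key]
  ring

lemma integral_P_zero : ∫ x : ℝ, (P 0).eval x * Real.exp (-x ^ 2 / 2)
    = Real.sqrt (2 * Real.pi) := by
  have h := integral_gaussian (1 / 2)
  have heq : ∀ x : ℝ, (P 0).eval x * Real.exp (-x ^ 2 / 2)
      = Real.exp (-(1 / 2) * x ^ 2) := by
    intro x
    simp [P]
    ring_nf
  rw [integral_congr_ae (Filter.Eventually.of_forall heq), h,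
    show Real.pi / (1 / 2) = 2 * Real.pi by ring]

lemma integral_P_even (m : ℕ) :
    ∫ x : ℝ, (P (2 * m)).eval x * Real.exp (-x ^ 2 / 2)
      = Real.sqrt (2 * Real.pi) * ((2 * m).factorial : ℝ) / (m.factorial : ℝ) := by
  induction m with
  | zero => simpa using integral_P_zero
  | succ m ih =>
    have h1 : 2 * (m + 1) = (2 * m + 1) + 1 := by ring
    rw [h1, integral_P_succ, derivative_P]
    have h2 : ∫ x : ℝ, (C (2 * ((2 * m : ℕ) + 1) : ℝ) * P (2 * m)).eval x
        * Real.exp (-x ^ 2 / 2)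
        = (2 * ((2 * m : ℕ) + 1) : ℝ) * ∫ x : ℝ, (P (2 * m)).eval x * Real.exp (-x ^ 2 / 2) := by
      rw [← integral_const_mul]
      refine integral_congr_ae (Filter.Eventually.of_forall fun x => ?_)
      simp only [eval_mul, eval_C]
      ring
    rw [h2, ih]
    have hm : (m.factorial : ℝ) ≠ 0 := Nat.cast_ne_zero.mpr m.factorial_ne_zero
    have hm1 : ((m + 1).factorial : ℝ) ≠ 0 := Nat.cast_ne_zero.mpr (m + 1).factorial_ne_zero
    rw [show (2 * m + 1 + 1).factorial = (2 * m + 1 + 1) * ((2 * m + 1) * (2 * m).factorial) by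
      rw [Nat.factorial_succ, Nat.factorial_succ]]
    rw [Nat.factorial_succ]
    push_cast
    field_simp
    ring

end PhysHermiteAux

/-- `∫_ℝ H_{2m}(x) e^{−x²/2} dx = √(2π) · (2m)! / m!`. -/
theorem integral_physHermite_even (m : ℕ) :
    ∫ x : ℝ, physHermite (2 * m) x * Real.exp (-x ^ 2 / 2)
      = Real.sqrt (2 * Real.pi) * ((2 * m).factorial : ℝ) / (m.factorial : ℝ) := by
  rw [← PhysHermiteAux.integral_P_even m]
  refine integral_congr_ae (Filter.Eventually.of_forall fun x => ?_)
  simp only [PhysHermiteAux.physHermite_eq]
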